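/- For integers m > r ≥ 1 with 2m ≥ 5, the Laplacian spectrum of the graph G_{m,r} on 2m vertices is the multiset {(1/2)(3m − 2r + √(m² + 4mr − 4r²))^{1}, (1/2)(3m − 2r − √(m² + 4mr − 4r²))^{1}, m^{2m−3}, 0^{1}}. -/

import Mathlib

/-- The graph `G_{m,r}` on `2m` vertices (for `m > r ≥ 1`): two disjoint copies of
`K_r ∇ ((m − r) K₁)` — in the first copy the clique is `{0, …, r−1}` and the independent
set is `{r, …, m−1}`, in the second copy the clique is `{m, …, m+r−1}` and the independent
set is `{m+r, …, 2m−1}` — together with all edges between the two independent sets. -/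
def Gmr (m r : ℕ) : SimpleGraph (Fin (2 * m)) where
  Adj u v := u ≠ v ∧
    ((u.val < m ∧ v.val < m ∧ (u.val < r ∨ v.val < r)) ∨
     (m ≤ u.val ∧ m ≤ v.val ∧ (u.val < m + r ∨ v.val < m + r)) ∨
     (r ≤ u.val ∧ u.val < m ∧ m + r ≤ v.val) ∨
     (r ≤ v.val ∧ v.val < m ∧ m + r ≤ u.val))
  symm := by constructor; intro u v h; exact ⟨h.1.symm, by tauto⟩
  loopless := by constructor; intro u h; exact h.1 rfl

instance (m r : ℕ) : DecidableRel (Gmr m r).Adj := fun u v =>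
  decidable_of_iff (u ≠ v ∧
    ((u.val < m ∧ v.val < m ∧ (u.val < r ∨ v.val < r)) ∨
     (m ≤ u.val ∧ m ≤ v.val ∧ (u.val < m + r ∨ v.val < m + r)) ∨
     (r ≤ u.val ∧ u.val < m ∧ m + r ≤ v.val) ∨
     (r ≤ v.val ∧ v.val < m ∧ m + r ≤ u.val))) Iff.rfl

namespace GmrAux
open Finset Polynomial Matrix

def natAdj (m r a b : ℕ) : Prop := a ≠ b ∧
    ((a < m ∧ b < m ∧ (a < r ∨ b < r)) ∨
     (m ≤ a ∧ m ≤ b ∧ (a < m + r ∨ b < m + r)) ∨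
     (r ≤ a ∧ a < m ∧ m + r ≤ b) ∨
     (r ≤ b ∧ b < m ∧ m + r ≤ a))

instance (m r a b : ℕ) : Decidable (natAdj m r a b) := by unfold natAdj; infer_instance

lemma adj_iff (m r : ℕ) (i j : Fin (2*m)) : (Gmr m r).Adj i j ↔ natAdj m r i.val j.val := by
  show (i ≠ j ∧ _) ↔ (i.val ≠ j.val ∧ _)
  constructor
  · rintro ⟨h1, h2⟩; exact ⟨fun h => h1 (Fin.ext h), h2⟩
  · rintro ⟨h1, h2⟩; exact ⟨fun h => h1 (congrArg Fin.val h), h2⟩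

lemma nsum_eq (m r : ℕ) (i : Fin (2*m)) (V : ℕ → ℝ) :
    ∑ u ∈ (Gmr m r).neighborFinset i, V u.val
      = ∑ j ∈ range (2*m), if natAdj m r i.val j then V j else 0 := by
  rw [SimpleGraph.neighborFinset_eq_filter, Finset.sum_filter,
    ← Fin.sum_univ_eq_sum_range (fun j => if natAdj m r i.val j then V j else 0) (2*m)]
  refine Finset.sum_congr rfl fun j _ => ?_
  by_cases h : natAdj m r i.val j.val
  · rw [if_pos ((adj_iff m r i j).mpr h), if_pos h]
  · rw [if_neg (fun hh => h ((adj_iff m r i j).mp hh)), if_neg h]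

lemma sum_if_ne {s : Finset ℕ} {a : ℕ} (ha : a ∈ s) (V : ℕ → ℝ) :
    (∑ j ∈ s, if j ≠ a then V j else 0) = (∑ j ∈ s, V j) - V a := by
  have h : ∀ j ∈ s, (if j ≠ a then V j else 0) = V j - (if j = a then V j else 0) := by
    intro j _; by_cases h : j = a <;> simp [h]
  rw [Finset.sum_congr rfl h, Finset.sum_sub_distrib, Finset.sum_ite_eq' s a V, if_pos ha]

lemma sum_if_iff {P Q : ℕ → Prop} [DecidablePred P] [DecidablePred Q] {s : Finset ℕ}
    (h : ∀ j ∈ s, P j ↔ Q j) (V : ℕ → ℝ) :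
    (∑ j ∈ s, if P j then V j else 0) = ∑ j ∈ s, if Q j then V j else 0 := by
  refine Finset.sum_congr rfl fun j hj => ?_
  by_cases hP : P j
  · rw [if_pos hP, if_pos ((h j hj).mp hP)]
  · rw [if_neg hP, if_neg (fun hq => hP ((h j hj).mpr hq))]

lemma sum_if_all {s : Finset ℕ} {P : ℕ → Prop} [DecidablePred P] (h : ∀ j ∈ s, P j) (V : ℕ → ℝ) :
    (∑ j ∈ s, if P j then V j else 0) = ∑ j ∈ s, V j :=
  Finset.sum_congr rfl fun j hj => if_pos (h j hj)

lemma sum_if_none {s : Finset ℕ} {P : ℕ → Prop} [DecidablePred P] (h : ∀ j ∈ s, ¬ P j) (V : ℕ → ℝ) :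
    (∑ j ∈ s, if P j then V j else 0) = 0 :=
  Finset.sum_eq_zero fun j hj => if_neg (h j hj)

lemma sum4 {m r : ℕ} (hrm : r < m) (f : ℕ → ℝ) :
    ∑ j ∈ range (2*m), f j =
      ((∑ j ∈ Ico 0 r, f j + ∑ j ∈ Ico r m, f j) + ∑ j ∈ Ico m (m+r), f j)
        + ∑ j ∈ Ico (m+r) (2*m), f j := by
  rw [Finset.sum_Ico_consecutive f (by omega : (0:ℕ) ≤ r) (by omega : r ≤ m),
      Finset.sum_Ico_consecutive f (by omega : (0:ℕ) ≤ m) (by omega : m ≤ m + r),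
      Finset.sum_Ico_consecutive f (by omega : (0:ℕ) ≤ m + r) (by omega : m + r ≤ 2*m),
      Finset.range_eq_Ico]

variable {m r : ℕ}


lemma nsum_C1 (hrm : r < m) {a : ℕ} (ha : a < r) (V : ℕ → ℝ) :
    (∑ j ∈ range (2*m), if natAdj m r a j then V j else 0) = (∑ j ∈ range m, V j) - V a := by
  rw [sum4 hrm]
  have h1 : (∑ j ∈ Ico 0 r, if natAdj m r a j then V j else 0)
      = ∑ j ∈ Ico 0 r, if j ≠ a then V j else 0 :=
    sum_if_iff (fun j hj => by simp only [mem_Ico] at hj; unfold natAdj; omega) V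
  have h2 : (∑ j ∈ Ico r m, if natAdj m r a j then V j else 0)
      = ∑ j ∈ Ico r m, if j ≠ a then V j else 0 :=
    sum_if_iff (fun j hj => by simp only [mem_Ico] at hj; unfold natAdj; omega) V
  have h3 : (∑ j ∈ Ico m (m+r), if natAdj m r a j then V j else 0) = 0 :=
    sum_if_none (fun j hj => by simp only [mem_Ico] at hj; unfold natAdj; omega) V
  have h4 : (∑ j ∈ Ico (m+r) (2*m), if natAdj m r a j then V j else 0) = 0 :=
    sum_if_none (fun j hj => by simp only [mem_Ico] at hj; unfold natAdj; omega) V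
  have h5 : (∑ j ∈ Ico 0 r, if j ≠ a then V j else 0) + (∑ j ∈ Ico r m, if j ≠ a then V j else 0)
      = ∑ j ∈ Ico 0 m, if j ≠ a then V j else 0 :=
    Finset.sum_Ico_consecutive _ (by omega) (by omega)
  rw [h1, h2, h3, h4, h5, ← Finset.range_eq_Ico, sum_if_ne (by simp only [mem_range]; omega) V]
  ring

lemma nsum_I1 (hr : 1 ≤ r) (hrm : r < m) {a : ℕ} (ha1 : r ≤ a) (ha2 : a < m) (V : ℕ → ℝ) :
    (∑ j ∈ range (2*m), if natAdj m r a j then V j else 0)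
      = (∑ j ∈ range r, V j) + ∑ j ∈ Ico (m+r) (2*m), V j := by
  rw [sum4 hrm]
  have h1 : (∑ j ∈ Ico 0 r, if natAdj m r a j then V j else 0) = ∑ j ∈ Ico 0 r, V j :=
    sum_if_all (fun j hj => by simp only [mem_Ico] at hj; unfold natAdj; omega) V
  have h2 : (∑ j ∈ Ico r m, if natAdj m r a j then V j else 0) = 0 :=
    sum_if_none (fun j hj => by simp only [mem_Ico] at hj; unfold natAdj; omega) V
  have h3 : (∑ j ∈ Ico m (m+r), if natAdj m r a j then V j else 0) = 0 :=
    sum_if_none (fun j hj => by simp only [mem_Ico] at hj; unfold natAdj; omega) V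
  have h4 : (∑ j ∈ Ico (m+r) (2*m), if natAdj m r a j then V j else 0)
      = ∑ j ∈ Ico (m+r) (2*m), V j :=
    sum_if_all (fun j hj => by simp only [mem_Ico] at hj; unfold natAdj; omega) V
  rw [h1, h2, h3, h4, ← Finset.range_eq_Ico]
  ring

lemma nsum_C2 (hrm : r < m) {a : ℕ} (ha1 : m ≤ a) (ha2 : a < m + r) (V : ℕ → ℝ) :
    (∑ j ∈ range (2*m), if natAdj m r a j then V j else 0) = (∑ j ∈ Ico m (2*m), V j) - V a := by
  rw [sum4 hrm]
  have h1 : (∑ j ∈ Ico 0 r, if natAdj m r a j then V j else 0) = 0 :=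
    sum_if_none (fun j hj => by simp only [mem_Ico] at hj; unfold natAdj; omega) V
  have h2 : (∑ j ∈ Ico r m, if natAdj m r a j then V j else 0) = 0 :=
    sum_if_none (fun j hj => by simp only [mem_Ico] at hj; unfold natAdj; omega) V
  have h3 : (∑ j ∈ Ico m (m+r), if natAdj m r a j then V j else 0)
      = ∑ j ∈ Ico m (m+r), if j ≠ a then V j else 0 :=
    sum_if_iff (fun j hj => by simp only [mem_Ico] at hj; unfold natAdj; omega) V
  have h4 : (∑ j ∈ Ico (m+r) (2*m), if natAdj m r a j then V j else 0)
      = ∑ j ∈ Ico (m+r) (2*m), if j ≠ a then V j else 0 :=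
    sum_if_iff (fun j hj => by simp only [mem_Ico] at hj; unfold natAdj; omega) V
  have h5 : (∑ j ∈ Ico m (m+r), if j ≠ a then V j else 0)
        + (∑ j ∈ Ico (m+r) (2*m), if j ≠ a then V j else 0)
      = ∑ j ∈ Ico m (2*m), if j ≠ a then V j else 0 :=
    Finset.sum_Ico_consecutive _ (by omega) (by omega)
  rw [h1, h2, h3, h4]
  rw [zero_add, zero_add, h5, sum_if_ne (by simp only [mem_Ico]; omega) V]

lemma nsum_I2 (hr : 1 ≤ r) (hrm : r < m) {a : ℕ} (ha1 : m + r ≤ a) (V : ℕ → ℝ) :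
    (∑ j ∈ range (2*m), if natAdj m r a j then V j else 0) = ∑ j ∈ Ico r (m+r), V j := by
  rw [sum4 hrm]
  have h1 : (∑ j ∈ Ico 0 r, if natAdj m r a j then V j else 0) = 0 :=
    sum_if_none (fun j hj => by simp only [mem_Ico] at hj; unfold natAdj; omega) V
  have h2 : (∑ j ∈ Ico r m, if natAdj m r a j then V j else 0) = ∑ j ∈ Ico r m, V j :=
    sum_if_all (fun j hj => by simp only [mem_Ico] at hj; unfold natAdj; omega) V
  have h3 : (∑ j ∈ Ico m (m+r), if natAdj m r a j then V j else 0) = ∑ j ∈ Ico m (m+r), V j :=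
    sum_if_all (fun j hj => by simp only [mem_Ico] at hj; unfold natAdj; omega) V
  have h4 : (∑ j ∈ Ico (m+r) (2*m), if natAdj m r a j then V j else 0) = 0 :=
    sum_if_none (fun j hj => by simp only [mem_Ico] at hj; unfold natAdj; omega) V
  rw [h1, h2, h3, h4, zero_add, add_zero,
    Finset.sum_Ico_consecutive _ (by omega : r ≤ m) (by omega : m ≤ m + r)]


/-! ### vectors -/

noncomputable def sv (m r : ℕ) : ℕ → ℝ := fun j =>
  if j < r then (m:ℝ) - r else if j < m then -(r:ℝ) else if j < m+r then (m:ℝ) - r else -(r:ℝ)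

noncomputable def wv (m r : ℕ) (x : ℝ) : ℕ → ℝ := fun j =>
  if j < r then 1 else if j < m then x else if j < m+r then -1 else -x

noncomputable def gv (lo k : ℕ) : ℕ → ℝ := fun j =>
  if lo ≤ j ∧ j < lo + k then 1 else if j = lo + k then -(k:ℝ) else 0

lemma sum_Ico_const {u v : ℕ} {W : ℕ → ℝ} {c : ℝ} (h : ∀ j, u ≤ j → j < v → W j = c) :
    ∑ j ∈ Ico u v, W j = ((v - u : ℕ) : ℝ) * c := by
  rw [Finset.sum_congr rfl (fun j hj => h j (mem_Ico.mp hj).1 (mem_Ico.mp hj).2),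
    Finset.sum_const, Nat.card_Ico, nsmul_eq_mul]

lemma gv_zero {lo k j : ℕ} (h : j < lo ∨ lo + k < j) : gv lo k j = 0 := by
  unfold gv; split_ifs <;> first | rfl | (exfalso; omega)

lemma gsum_Ico_full {m lo k u v : ℕ} (h1 : u ≤ lo) (h2 : lo + k < v) :
    ∑ j ∈ Ico u v, gv lo k j = 0 := by
  rw [← Finset.sum_subset (Finset.Ico_subset_Ico h1 (by omega : lo + k + 1 ≤ v))
    (fun x hx hnx => gv_zero (by simp only [mem_Ico] at hx hnx; omega))]
  rw [Finset.sum_Ico_succ_top (by omega)]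
  have h3 : ∑ j ∈ Ico lo (lo+k), gv lo k j = ((lo + k - lo : ℕ) : ℝ) * 1 :=
    sum_Ico_const (fun j hj1 hj2 => by unfold gv; rw [if_pos ⟨hj1, hj2⟩])
  rw [h3]
  unfold gv
  rw [if_neg (by omega), if_pos rfl]
  have : lo + k - lo = k := by omega
  rw [this]; ring

lemma gsum_Ico_out {lo k u v : ℕ} (h : v ≤ lo ∨ lo + k < u) :
    ∑ j ∈ Ico u v, gv lo k j = 0 :=
  Finset.sum_eq_zero fun j hj => gv_zero (by simp only [mem_Ico] at hj; omega)

/-! ### degrees -/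

variable {m r : ℕ}

lemma deg_eq (i : Fin (2*m)) :
    ((Gmr m r).degree i : ℝ) = ∑ j ∈ range (2*m), if natAdj m r i.val j then (1:ℝ) else 0 := by
  rw [← nsum_eq]
  have h : (Gmr m r).degree i = ∑ _u ∈ (Gmr m r).neighborFinset i, 1 := by
    rw [SimpleGraph.degree, Finset.card_eq_sum_ones]
  rw [h]; push_cast; rfl

lemma deg_C1 (hrm : r < m) {i : Fin (2*m)} (ha : i.val < r) :
    ((Gmr m r).degree i : ℝ) = (m:ℝ) - 1 := by
  rw [deg_eq, nsum_C1 hrm ha]; simp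

lemma deg_I1 (hr : 1 ≤ r) (hrm : r < m) {i : Fin (2*m)} (ha1 : r ≤ i.val) (ha2 : i.val < m) :
    ((Gmr m r).degree i : ℝ) = (m:ℝ) := by
  rw [deg_eq, nsum_I1 hr hrm ha1 ha2]
  simp only [Finset.sum_const, card_range, Nat.card_Ico, nsmul_eq_mul, mul_one]
  have h : 2*m - (m+r) = m - r := by omega
  rw [h, Nat.cast_sub hrm.le]; ring

lemma deg_C2 (hrm : r < m) {i : Fin (2*m)} (ha1 : m ≤ i.val) (ha2 : i.val < m + r) :
    ((Gmr m r).degree i : ℝ) = (m:ℝ) - 1 := by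
  rw [deg_eq, nsum_C2 hrm ha1 ha2]
  simp only [Finset.sum_const, Nat.card_Ico, nsmul_eq_mul, mul_one]
  have h : 2*m - m = m := by omega
  rw [h]

lemma deg_I2 (hr : 1 ≤ r) (hrm : r < m) {i : Fin (2*m)} (ha1 : m + r ≤ i.val) :
    ((Gmr m r).degree i : ℝ) = (m:ℝ) := by
  rw [deg_eq, nsum_I2 hr hrm ha1]
  simp only [Finset.sum_const, Nat.card_Ico, nsmul_eq_mul, mul_one]
  have h : m + r - r = m := by omega
  rw [h]


/-! ### block sums and values of sv, wv -/

lemma sv_v1 {j : ℕ} (h : j < r) : sv m r j = (m:ℝ) - r := by unfold sv; rw [if_pos h]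
lemma sv_v2 (hrm : r < m) {j : ℕ} (h1 : r ≤ j) (h2 : j < m) : sv m r j = -(r:ℝ) := by
  unfold sv; rw [if_neg (by omega), if_pos h2]
lemma sv_v3 (hrm : r < m) {j : ℕ} (h1 : m ≤ j) (h2 : j < m + r) : sv m r j = (m:ℝ) - r := by
  unfold sv; rw [if_neg (by omega), if_neg (by omega), if_pos h2]
lemma sv_v4 (hrm : r < m) {j : ℕ} (h1 : m + r ≤ j) : sv m r j = -(r:ℝ) := by
  unfold sv; rw [if_neg (by omega), if_neg (by omega), if_neg (by omega)]

lemma wv_v1 {x : ℝ} {j : ℕ} (h : j < r) : wv m r x j = 1 := by unfold wv; rw [if_pos h]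
lemma wv_v2 (hrm : r < m) {x : ℝ} {j : ℕ} (h1 : r ≤ j) (h2 : j < m) : wv m r x j = x := by
  unfold wv; rw [if_neg (by omega), if_pos h2]
lemma wv_v3 (hrm : r < m) {x : ℝ} {j : ℕ} (h1 : m ≤ j) (h2 : j < m + r) : wv m r x j = -1 := by
  unfold wv; rw [if_neg (by omega), if_neg (by omega), if_pos h2]
lemma wv_v4 (hrm : r < m) {x : ℝ} {j : ℕ} (h1 : m + r ≤ j) : wv m r x j = -x := by
  unfold wv; rw [if_neg (by omega), if_neg (by omega), if_neg (by omega)]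

lemma sv_s1 (hrm : r < m) : ∑ j ∈ Ico 0 r, sv m r j = (r:ℝ) * ((m:ℝ) - r) := by
  rw [sum_Ico_const (c := (m:ℝ) - r) (fun j _ hj2 => sv_v1 hj2)]; norm_num
lemma sv_s2 (hrm : r < m) : ∑ j ∈ Ico r m, sv m r j = ((m:ℝ) - r) * (-(r:ℝ)) := by
  rw [sum_Ico_const (c := -(r:ℝ)) (fun j hj1 hj2 => sv_v2 hrm hj1 hj2), Nat.cast_sub hrm.le]
lemma sv_s3 (hrm : r < m) : ∑ j ∈ Ico m (m+r), sv m r j = (r:ℝ) * ((m:ℝ) - r) := by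
  rw [sum_Ico_const (c := (m:ℝ) - r) (fun j hj1 hj2 => sv_v3 hrm hj1 hj2)]
  have h : m + r - m = r := by omega
  rw [h]
lemma sv_s4 (hrm : r < m) : ∑ j ∈ Ico (m+r) (2*m), sv m r j = ((m:ℝ) - r) * (-(r:ℝ)) := by
  rw [sum_Ico_const (c := -(r:ℝ)) (fun j hj1 _ => sv_v4 hrm hj1)]
  have h : 2*m - (m+r) = m - r := by omega
  rw [h, Nat.cast_sub hrm.le]

lemma wv_s1 (x : ℝ) : ∑ j ∈ Ico 0 r, wv m r x j = (r:ℝ) := by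
  rw [sum_Ico_const (c := 1) (fun j _ hj2 => wv_v1 hj2)]; norm_num
lemma wv_s2 (hrm : r < m) (x : ℝ) : ∑ j ∈ Ico r m, wv m r x j = ((m:ℝ) - r) * x := by
  rw [sum_Ico_const (c := x) (fun j hj1 hj2 => wv_v2 hrm hj1 hj2), Nat.cast_sub hrm.le]
lemma wv_s3 (hrm : r < m) (x : ℝ) : ∑ j ∈ Ico m (m+r), wv m r x j = -(r:ℝ) := by
  rw [sum_Ico_const (c := -1) (fun j hj1 hj2 => wv_v3 hrm hj1 hj2)]
  have h : m + r - m = r := by omega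
  rw [h]; ring
lemma wv_s4 (hrm : r < m) (x : ℝ) : ∑ j ∈ Ico (m+r) (2*m), wv m r x j = -(((m:ℝ) - r) * x) := by
  rw [sum_Ico_const (c := -x) (fun j hj1 _ => wv_v4 hrm hj1)]
  have h : 2*m - (m+r) = m - r := by omega
  rw [h, Nat.cast_sub hrm.le]; ring

/-! ### eigenvector equations -/

lemma eig_ones : (Gmr m r).lapMatrix ℝ *ᵥ (fun _ => (1:ℝ)) = fun _ => (0:ℝ) * 1 := by
  have h := SimpleGraph.lapMatrix_mulVec_const_eq_zero (R := ℝ) (G := Gmr m r)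
  funext i
  rw [h]; norm_num

lemma eig_sv (hr : 1 ≤ r) (hrm : r < m) :
    (Gmr m r).lapMatrix ℝ *ᵥ (fun x => sv m r x.val) = fun x => (m:ℝ) * sv m r x.val := by
  funext i
  rw [SimpleGraph.lapMatrix_mulVec_apply, nsum_eq]
  rcases Nat.lt_or_ge i.val r with h1 | h1
  · rw [nsum_C1 hrm h1, deg_C1 hrm h1, sv_v1 h1, Finset.range_eq_Ico,
      ← Finset.sum_Ico_consecutive _ (by omega : (0:ℕ) ≤ r) (by omega : r ≤ m),
      sv_s1 hrm, sv_s2 hrm]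
    ring
  rcases Nat.lt_or_ge i.val m with h2 | h2
  · rw [nsum_I1 hr hrm h1 h2, deg_I1 hr hrm h1 h2, sv_v2 hrm h1 h2, Finset.range_eq_Ico,
      sv_s1 hrm, sv_s4 hrm]
    ring
  rcases Nat.lt_or_ge i.val (m+r) with h3 | h3
  · rw [nsum_C2 hrm h2 h3, deg_C2 hrm h2 h3, sv_v3 hrm h2 h3,
      ← Finset.sum_Ico_consecutive _ (by omega : m ≤ m + r) (by omega : m + r ≤ 2*m),
      sv_s3 hrm, sv_s4 hrm]
    ring
  · rw [nsum_I2 hr hrm h3, deg_I2 hr hrm h3, sv_v4 hrm h3,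
      ← Finset.sum_Ico_consecutive _ (by omega : r ≤ m) (by omega : m ≤ m + r),
      sv_s2 hrm, sv_s3 hrm]
    ring

lemma eig_wv (hr : 1 ≤ r) (hrm : r < m) (x lam : ℝ)
    (hq : ((m:ℝ) - r) * x^2 + (m:ℝ) * x = r) (hlam : lam = ((m:ℝ) - r) * (1 - x)) :
    (Gmr m r).lapMatrix ℝ *ᵥ (fun i => wv m r x i.val) = fun i => lam * wv m r x i.val := by
  funext i
  rw [SimpleGraph.lapMatrix_mulVec_apply, nsum_eq]
  rcases Nat.lt_or_ge i.val r with h1 | h1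
  · rw [nsum_C1 hrm h1, deg_C1 hrm h1, wv_v1 h1, Finset.range_eq_Ico,
      ← Finset.sum_Ico_consecutive _ (by omega : (0:ℕ) ≤ r) (by omega : r ≤ m),
      wv_s1, wv_s2 hrm]
    rw [hlam]; ring
  rcases Nat.lt_or_ge i.val m with h2 | h2
  · rw [nsum_I1 hr hrm h1 h2, deg_I1 hr hrm h1 h2, wv_v2 hrm h1 h2, Finset.range_eq_Ico,
      wv_s1, wv_s4 hrm]
    rw [hlam]; linear_combination hq
  rcases Nat.lt_or_ge i.val (m+r) with h3 | h3
  · rw [nsum_C2 hrm h2 h3, deg_C2 hrm h2 h3, wv_v3 hrm h2 h3,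
      ← Finset.sum_Ico_consecutive _ (by omega : m ≤ m + r) (by omega : m + r ≤ 2*m),
      wv_s3 hrm, wv_s4 hrm]
    rw [hlam]; ring
  · rw [nsum_I2 hr hrm h3, deg_I2 hr hrm h3, wv_v4 hrm h3,
      ← Finset.sum_Ico_consecutive _ (by omega : r ≤ m) (by omega : m ≤ m + r),
      wv_s2 hrm, wv_s3 hrm]
    rw [hlam]; linear_combination -hq


lemma eig_gC1 (hr : 1 ≤ r) (hrm : r < m) {k : ℕ} (hk1 : 1 ≤ k) (hk2 : k < r) :
    (Gmr m r).lapMatrix ℝ *ᵥ (fun i => gv 0 k i.val) = fun i => (m:ℝ) * gv 0 k i.val := by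
  funext i
  rw [SimpleGraph.lapMatrix_mulVec_apply, nsum_eq]
  rcases Nat.lt_or_ge i.val r with h1 | h1
  · rw [nsum_C1 hrm h1, deg_C1 hrm h1, Finset.range_eq_Ico,
      gsum_Ico_full (m := m) (by omega) (by omega)]
    ring
  rcases Nat.lt_or_ge i.val m with h2 | h2
  · rw [nsum_I1 hr hrm h1 h2, Finset.range_eq_Ico,
      gsum_Ico_full (m := m) (by omega) (by omega), gsum_Ico_out (by omega),
      gv_zero (j := i.val) (by omega)]
    ring
  rcases Nat.lt_or_ge i.val (m+r) with h3 | h3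
  · rw [nsum_C2 hrm h2 h3, gsum_Ico_out (by omega), gv_zero (j := i.val) (by omega)]
    ring
  · rw [nsum_I2 hr hrm h3, gsum_Ico_out (by omega), gv_zero (j := i.val) (by omega)]
    ring

lemma eig_gI1 (hr : 1 ≤ r) (hrm : r < m) {k : ℕ} (hk1 : 1 ≤ k) (hk2 : r + k < m) :
    (Gmr m r).lapMatrix ℝ *ᵥ (fun i => gv r k i.val) = fun i => (m:ℝ) * gv r k i.val := by
  funext i
  rw [SimpleGraph.lapMatrix_mulVec_apply, nsum_eq]
  rcases Nat.lt_or_ge i.val r with h1 | h1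
  · rw [nsum_C1 hrm h1, deg_C1 hrm h1, Finset.range_eq_Ico,
      gsum_Ico_full (m := m) (by omega) (by omega), gv_zero (j := i.val) (by omega)]
    ring
  rcases Nat.lt_or_ge i.val m with h2 | h2
  · rw [nsum_I1 hr hrm h1 h2, deg_I1 hr hrm h1 h2, Finset.range_eq_Ico,
      gsum_Ico_out (by omega), gsum_Ico_out (by omega)]
    ring
  rcases Nat.lt_or_ge i.val (m+r) with h3 | h3
  · rw [nsum_C2 hrm h2 h3, gsum_Ico_out (by omega), gv_zero (j := i.val) (by omega)]
    ring
  · rw [nsum_I2 hr hrm h3, gsum_Ico_full (m := m) (by omega) (by omega),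
      gv_zero (j := i.val) (by omega)]
    ring

lemma eig_gC2 (hr : 1 ≤ r) (hrm : r < m) {k : ℕ} (hk1 : 1 ≤ k) (hk2 : m + k < m + r) :
    (Gmr m r).lapMatrix ℝ *ᵥ (fun i => gv m k i.val) = fun i => (m:ℝ) * gv m k i.val := by
  funext i
  rw [SimpleGraph.lapMatrix_mulVec_apply, nsum_eq]
  rcases Nat.lt_or_ge i.val r with h1 | h1
  · rw [nsum_C1 hrm h1, Finset.range_eq_Ico, gsum_Ico_out (by omega),
      gv_zero (j := i.val) (by omega)]
    ring
  rcases Nat.lt_or_ge i.val m with h2 | h2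
  · rw [nsum_I1 hr hrm h1 h2, Finset.range_eq_Ico,
      gsum_Ico_out (by omega), gsum_Ico_out (by omega), gv_zero (j := i.val) (by omega)]
    ring
  rcases Nat.lt_or_ge i.val (m+r) with h3 | h3
  · rw [nsum_C2 hrm h2 h3, deg_C2 hrm h2 h3,
      gsum_Ico_full (m := m) (by omega) (by omega)]
    ring
  · rw [nsum_I2 hr hrm h3, gsum_Ico_full (m := m) (by omega) (by omega),
      gv_zero (j := i.val) (by omega)]
    ring

lemma eig_gI2 (hr : 1 ≤ r) (hrm : r < m) {k : ℕ} (hk1 : 1 ≤ k) (hk2 : m + r + k < 2*m) :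
    (Gmr m r).lapMatrix ℝ *ᵥ (fun i => gv (m+r) k i.val) = fun i => (m:ℝ) * gv (m+r) k i.val := by
  funext i
  rw [SimpleGraph.lapMatrix_mulVec_apply, nsum_eq]
  rcases Nat.lt_or_ge i.val r with h1 | h1
  · rw [nsum_C1 hrm h1, Finset.range_eq_Ico, gsum_Ico_out (by omega),
      gv_zero (j := i.val) (by omega)]
    ring
  rcases Nat.lt_or_ge i.val m with h2 | h2
  · rw [nsum_I1 hr hrm h1 h2, Finset.range_eq_Ico,
      gsum_Ico_out (by omega), gsum_Ico_full (m := m) (by omega) (by omega),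
      gv_zero (j := i.val) (by omega)]
    ring
  rcases Nat.lt_or_ge i.val (m+r) with h3 | h3
  · rw [nsum_C2 hrm h2 h3, gsum_Ico_full (m := m) (by omega) (by omega),
      gv_zero (j := i.val) (by omega)]
    ring
  · rw [nsum_I2 hr hrm h3, deg_I2 hr hrm h3, gsum_Ico_out (by omega)]
    ring


/-! ### column indexing -/

def glo (m r j : ℕ) : ℕ :=
  if j < r + 3 then 0 else if j < m + 2 then r else if j < m + r + 1 then m else m + r

def gk (m r j : ℕ) : ℕ :=
  if j < r + 3 then j - 3 else if j < m + 2 then j - (r+2)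
  else if j < m + r + 1 then j - (m+1) else j - (m+r)

noncomputable def col (m r : ℕ) (x1 x2 : ℝ) (j : ℕ) : ℕ → ℝ :=
  if j = 0 then fun _ => 1
  else if j = 1 then wv m r x1
  else if j = 2 then wv m r x2
  else if j = 3 then sv m r
  else gv (glo m r j) (gk m r j)

noncomputable def evv (m : ℕ) (l1 l2 : ℝ) (j : ℕ) : ℝ :=
  if j = 0 then 0 else if j = 1 then l1 else if j = 2 then l2 else (m:ℝ)

noncomputable def nf (m r : ℕ) (x1 x2 : ℝ) (j : ℕ) : ℝ :=
  if j = 0 then 2*(m:ℝ)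
  else if j = 1 then 2*(r:ℝ) + 2*((m:ℝ) - r)*x1^2
  else if j = 2 then 2*(r:ℝ) + 2*((m:ℝ) - r)*x2^2
  else if j = 3 then 2*(m:ℝ)*r*((m:ℝ) - r)
  else (gk m r j : ℝ) * ((gk m r j : ℝ) + 1)

lemma gspec (hr : 1 ≤ r) (hrm : r < m) {v : ℕ} (h4 : 4 ≤ v) (hv : v < 2*m) :
    (v < r+3 ∧ glo m r v = 0 ∧ gk m r v = v - 3 ∧ 1 ≤ gk m r v ∧ gk m r v < r) ∨
    (r+3 ≤ v ∧ v < m+2 ∧ glo m r v = r ∧ gk m r v = v - (r+2) ∧ 1 ≤ gk m r v ∧ r + gk m r v < m) ∨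
    (m+2 ≤ v ∧ v < m+r+1 ∧ glo m r v = m ∧ gk m r v = v - (m+1) ∧ 1 ≤ gk m r v ∧ m + gk m r v < m + r) ∨
    (m+r+1 ≤ v ∧ glo m r v = m+r ∧ gk m r v = v - (m+r) ∧ 1 ≤ gk m r v ∧ m + r + gk m r v < 2*m) := by
  unfold glo gk; split_ifs <;> omega

lemma col_ge4 {x1 x2 : ℝ} {v : ℕ} (h4 : 4 ≤ v) :
    col m r x1 x2 v = gv (glo m r v) (gk m r v) := by
  unfold col
  rw [if_neg (by omega), if_neg (by omega), if_neg (by omega), if_neg (by omega)]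

lemma eig_col (hr : 1 ≤ r) (hrm : r < m) (x1 x2 l1 l2 : ℝ)
    (hq1 : ((m:ℝ) - r) * x1^2 + (m:ℝ) * x1 = r) (hl1 : l1 = ((m:ℝ) - r) * (1 - x1))
    (hq2 : ((m:ℝ) - r) * x2^2 + (m:ℝ) * x2 = r) (hl2 : l2 = ((m:ℝ) - r) * (1 - x2))
    (j : Fin (2*m)) :
    (Gmr m r).lapMatrix ℝ *ᵥ (fun i => col m r x1 x2 j.val i.val)
      = fun i => evv m l1 l2 j.val * col m r x1 x2 j.val i.val := by
  by_cases h0 : j.val = 0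
  · simp only [col, evv, h0, if_pos rfl]
    exact eig_ones
  by_cases h1 : j.val = 1
  · simp only [col, evv, h1]
    norm_num
    exact eig_wv hr hrm x1 l1 hq1 hl1
  by_cases h2 : j.val = 2
  · simp only [col, evv, h2]
    norm_num
    exact eig_wv hr hrm x2 l2 hq2 hl2
  by_cases h3 : j.val = 3
  · simp only [col, evv, h3]
    norm_num
    exact eig_sv hr hrm
  have h4 : 4 ≤ j.val := by omega
  rw [col_ge4 h4]
  have hev : evv m l1 l2 j.val = (m:ℝ) := by
    unfold evv; rw [if_neg h0, if_neg h1, if_neg h2]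
  rw [hev]
  rcases gspec hr hrm h4 j.isLt with ⟨_, hlo, _, hk1, hk2⟩ | ⟨_, _, hlo, _, hk1, hk2⟩ |
    ⟨_, _, hlo, _, hk1, hk2⟩ | ⟨_, hlo, _, hk1, hk2⟩
  · rw [hlo]; exact eig_gC1 hr hrm hk1 hk2
  · rw [hlo]; exact eig_gI1 hr hrm hk1 hk2
  · rw [hlo]; exact eig_gC2 hr hrm hk1 (by omega)
  · rw [hlo]; exact eig_gI2 hr hrm hk1 hk2


/-! ### dot products -/

lemma dR_comm (V W : ℕ → ℝ) :
    ∑ j ∈ range (2*m), V j * W j = ∑ j ∈ range (2*m), W j * V j :=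
  Finset.sum_congr rfl fun j _ => mul_comm _ _

lemma dR_ones : ∑ j ∈ range (2*m), (1:ℝ) * 1 = 2*(m:ℝ) := by simp

lemma dR_w (hrm : r < m) (x : ℝ) :
    ∑ j ∈ range (2*m), wv m r x j * wv m r x j = 2*(r:ℝ) + 2*((m:ℝ) - r)*x^2 := by
  rw [sum4 hrm]
  rw [sum_Ico_const (c := (1:ℝ)) (fun j _ h2 => by rw [wv_v1 h2]; norm_num),
      sum_Ico_const (c := x^2) (fun j h1 h2 => by rw [wv_v2 hrm h1 h2]; ring),
      sum_Ico_const (c := (1:ℝ)) (fun j h1 h2 => by rw [wv_v3 hrm h1 h2]; norm_num),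
      sum_Ico_const (c := x^2) (fun j h1 _ => by rw [wv_v4 hrm h1]; ring)]
  have e1 : r - 0 = r := by omega
  have e2 : m - r = m - r := rfl
  have e3 : m + r - m = r := by omega
  have e4 : 2*m - (m+r) = m - r := by omega
  rw [e1, e3, e4, Nat.cast_sub hrm.le]
  ring

lemma dR_sv (hrm : r < m) :
    ∑ j ∈ range (2*m), sv m r j * sv m r j = 2*(m:ℝ)*r*((m:ℝ) - r) := by
  rw [sum4 hrm]
  rw [sum_Ico_const (c := ((m:ℝ)-r)^2) (fun j _ h2 => by rw [sv_v1 h2]; ring),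
      sum_Ico_const (c := ((r:ℝ))^2) (fun j h1 h2 => by rw [sv_v2 hrm h1 h2]; ring),
      sum_Ico_const (c := ((m:ℝ)-r)^2) (fun j h1 h2 => by rw [sv_v3 hrm h1 h2]; ring),
      sum_Ico_const (c := ((r:ℝ))^2) (fun j h1 _ => by rw [sv_v4 hrm h1]; ring)]
  have e1 : r - 0 = r := by omega
  have e3 : m + r - m = r := by omega
  have e4 : 2*m - (m+r) = m - r := by omega
  rw [e1, e3, e4, Nat.cast_sub hrm.le]
  ring

lemma dR_const_g {W : ℕ → ℝ} {c : ℝ} {lo k : ℕ} (hfit : lo + k < 2*m)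
    (hW : ∀ j, lo ≤ j → j ≤ lo + k → W j = c) :
    ∑ j ∈ range (2*m), W j * gv lo k j = 0 := by
  rw [← Finset.sum_subset (s₁ := Ico lo (lo+k+1))
      (by rw [Finset.range_eq_Ico]; exact Finset.Ico_subset_Ico (by omega) (by omega))
      (fun x hx hnx => by rw [gv_zero (by simp only [mem_Ico] at hnx; simp only [mem_range] at hx; omega), mul_zero])]
  have h : ∀ j ∈ Ico lo (lo+k+1), W j * gv lo k j = c * gv lo k j := fun j hj => by
    rw [hW j (mem_Ico.mp hj).1 (by have := (mem_Ico.mp hj).2; omega)]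
  rw [Finset.sum_congr rfl h, ← Finset.mul_sum, gsum_Ico_full (m := m) le_rfl (by omega), mul_zero]

lemma dR_g_norm {lo k : ℕ} (hk : 1 ≤ k) (hfit : lo + k < 2*m) :
    ∑ j ∈ range (2*m), gv lo k j * gv lo k j = (k:ℝ) * ((k:ℝ) + 1) := by
  rw [← Finset.sum_subset (s₁ := Ico lo (lo+k+1))
      (by rw [Finset.range_eq_Ico]; exact Finset.Ico_subset_Ico (by omega) (by omega))
      (fun x hx hnx => by rw [gv_zero (by simp only [mem_Ico] at hnx; simp only [mem_range] at hx; omega), mul_zero])]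
  rw [Finset.sum_Ico_succ_top (by omega)]
  have h3 : ∑ j ∈ Ico lo (lo+k), gv lo k j * gv lo k j = ((lo + k - lo : ℕ) : ℝ) * 1 :=
    sum_Ico_const (fun j hj1 hj2 => by unfold gv; rw [if_pos ⟨hj1, hj2⟩]; norm_num)
  rw [h3]
  have hv : gv lo k (lo+k) = -(k:ℝ) := by unfold gv; rw [if_neg (by omega), if_pos rfl]
  rw [hv]
  have : lo + k - lo = k := by omega
  rw [this]; ring

lemma dR_gg_lt {lo k l : ℕ} (hkl : k < l) (hfit : lo + k < 2*m) :
    ∑ j ∈ range (2*m), gv lo l j * gv lo k j = 0 :=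
  dR_const_g hfit (fun j hj1 hj2 => by unfold gv; rw [if_pos ⟨hj1, by omega⟩])

lemma dR_gg_disj {lo k lo' l : ℕ} (h : lo + k < lo') :
    ∑ j ∈ range (2*m), gv lo k j * gv lo' l j = 0 := by
  refine Finset.sum_eq_zero fun j _ => ?_
  rcases Nat.lt_or_ge j lo' with hj | hj
  · rw [gv_zero (Or.inl hj), mul_zero]
  · rw [gv_zero (k := k) (Or.inr (by omega)), zero_mul]

lemma dR_gg (hr : 1 ≤ r) (hrm : r < m) {v v' : ℕ} (h4 : 4 ≤ v) (hv : v < 2*m)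
    (h4' : 4 ≤ v') (hv' : v' < 2*m) (hne : v ≠ v') :
    ∑ j ∈ range (2*m), gv (glo m r v) (gk m r v) j * gv (glo m r v') (gk m r v') j = 0 := by
  have hS := gspec hr hrm h4 hv
  have hS' := gspec hr hrm h4' hv'
  -- same block: lo equal, k different; different blocks: disjoint
  rcases Nat.lt_trichotomy (glo m r v + gk m r v) (glo m r v') with h | h | h
  · exact dR_gg_disj h
  · -- impossible: glo v' ≤ glo v + gk v means same or earlier block... handle via omega cases
    exfalso
    rcases hS with ⟨_,e1,e2,_,_⟩ | ⟨_,_,e1,e2,_,_⟩ | ⟨_,_,e1,e2,_,_⟩ | ⟨_,e1,e2,_,_⟩ <;>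
    rcases hS' with ⟨_,f1,f2,_,_⟩ | ⟨_,_,f1,f2,_,_⟩ | ⟨_,_,f1,f2,_,_⟩ | ⟨_,f1,f2,_,_⟩ <;>
      omega
  · -- either same block with different k, or v' block is before v block
    rcases Nat.lt_trichotomy (glo m r v' + gk m r v') (glo m r v) with h' | h' | h'
    · rw [dR_comm]; exact dR_gg_disj h'
    · exfalso
      rcases hS with ⟨_,e1,e2,_,_⟩ | ⟨_,_,e1,e2,_,_⟩ | ⟨_,_,e1,e2,_,_⟩ | ⟨_,e1,e2,_,_⟩ <;>
      rcases hS' with ⟨_,f1,f2,_,_⟩ | ⟨_,_,f1,f2,_,_⟩ | ⟨_,_,f1,f2,_,_⟩ | ⟨_,f1,f2,_,_⟩ <;>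
        omega
    · -- same block
      have hlo : glo m r v = glo m r v' := by
        rcases hS with ⟨_,e1,e2,_,_⟩ | ⟨_,_,e1,e2,_,_⟩ | ⟨_,_,e1,e2,_,_⟩ | ⟨_,e1,e2,_,_⟩ <;>
        rcases hS' with ⟨_,f1,f2,_,_⟩ | ⟨_,_,f1,f2,_,_⟩ | ⟨_,_,f1,f2,_,_⟩ | ⟨_,f1,f2,_,_⟩ <;>
          omega
      have hfit : glo m r v + gk m r v < 2*m := by
        rcases hS with ⟨_,e1,e2,_,_⟩ | ⟨_,_,e1,e2,_,_⟩ | ⟨_,_,e1,e2,_,_⟩ | ⟨_,e1,e2,_,_⟩ <;> omega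
      have hfit' : glo m r v' + gk m r v' < 2*m := by
        rcases hS' with ⟨_,f1,f2,_,_⟩ | ⟨_,_,f1,f2,_,_⟩ | ⟨_,_,f1,f2,_,_⟩ | ⟨_,f1,f2,_,_⟩ <;> omega
      have hkk : gk m r v ≠ gk m r v' := by omega
      rcases Nat.lt_or_ge (gk m r v) (gk m r v') with hlt | hge
      · rw [dR_comm, hlo]
        exact dR_gg_lt hlt (by omega)
      · rw [hlo]
        exact dR_gg_lt (by omega) (by omega)

lemma dR_sv_g (hr : 1 ≤ r) (hrm : r < m) {v' : ℕ} (h4 : 4 ≤ v') (hv : v' < 2*m) :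
    ∑ j ∈ range (2*m), sv m r j * gv (glo m r v') (gk m r v') j = 0 := by
  rcases gspec hr hrm h4 hv with ⟨_,hlo,_,hk1,hk2⟩ | ⟨_,_,hlo,_,hk1,hk2⟩ |
    ⟨_,_,hlo,_,hk1,hk2⟩ | ⟨_,hlo,_,hk1,hk2⟩
  · rw [hlo]; exact dR_const_g (by omega) (fun j hj1 hj2 => sv_v1 (by omega))
  · rw [hlo]; exact dR_const_g (by omega) (fun j hj1 hj2 => sv_v2 hrm (by omega) (by omega))
  · rw [hlo]; exact dR_const_g (by omega) (fun j hj1 hj2 => sv_v3 hrm (by omega) (by omega))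
  · rw [hlo]; exact dR_const_g (by omega) (fun j hj1 hj2 => sv_v4 hrm (by omega))


/-! ### orthogonality of eigenvectors for distinct eigenvalues -/

lemma ortho {n : ℕ} {L : Matrix (Fin n) (Fin n) ℝ} (hL : L.IsSymm) {u v : Fin n → ℝ} {μ ν : ℝ}
    (hu : L *ᵥ u = fun i => μ * u i) (hv : L *ᵥ v = fun i => ν * v i) (hμν : μ ≠ ν) :
    u ⬝ᵥ v = 0 := by
  have h1 : (L *ᵥ u) ⬝ᵥ v = μ * (u ⬝ᵥ v) := by
    rw [hu]; simp only [dotProduct, Finset.mul_sum, mul_assoc]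
  have h2 : (L *ᵥ u) ⬝ᵥ v = ν * (u ⬝ᵥ v) := by
    calc (L *ᵥ u) ⬝ᵥ v = v ⬝ᵥ (L *ᵥ u) := dotProduct_comm _ _
    _ = (v ᵥ* L) ⬝ᵥ u := dotProduct_mulVec v L u
    _ = (Lᵀ *ᵥ v) ⬝ᵥ u := by rw [mulVec_transpose]
    _ = (L *ᵥ v) ⬝ᵥ u := by rw [hL]
    _ = ν * (v ⬝ᵥ u) := by rw [hv]; simp only [dotProduct, Finset.mul_sum, mul_assoc]
    _ = ν * (u ⬝ᵥ v) := by rw [dotProduct_comm]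
  have h3 : (μ - ν) * (u ⬝ᵥ v) = 0 := by rw [sub_mul, ← h1, ← h2, sub_self]
  rcases mul_eq_zero.mp h3 with h | h
  · exact absurd (by linarith : μ = ν) hμν
  · exact h

/-! ### the Gram matrix -/

lemma dot_conv {n : ℕ} (V W : ℕ → ℝ) :
    (fun i : Fin n => V i.val) ⬝ᵥ (fun i : Fin n => W i.val) = ∑ j ∈ range n, V j * W j := by
  rw [dotProduct]
  exact Fin.sum_univ_eq_sum_range (fun j => V j * W j) n

lemma gram (hr : 1 ≤ r) (hrm : r < m) (x1 x2 l1 l2 : ℝ)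
    (hq1 : ((m:ℝ) - r) * x1^2 + (m:ℝ) * x1 = r) (hl1 : l1 = ((m:ℝ) - r) * (1 - x1))
    (hq2 : ((m:ℝ) - r) * x2^2 + (m:ℝ) * x2 = r) (hl2 : l2 = ((m:ℝ) - r) * (1 - x2))
    (h0m : (0:ℝ) ≠ (m:ℝ)) (h01 : (0:ℝ) ≠ l1) (h02 : (0:ℝ) ≠ l2)
    (h12 : l1 ≠ l2) (h1m : l1 ≠ (m:ℝ)) (h2m : l2 ≠ (m:ℝ)) :
    (Matrix.of fun i j : Fin (2*m) => col m r x1 x2 j.val i.val)ᵀ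
      * (Matrix.of fun i j : Fin (2*m) => col m r x1 x2 j.val i.val)
      = diagonal (fun j : Fin (2*m) => nf m r x1 x2 j.val) := by
  have hsym := SimpleGraph.isSymm_lapMatrix (Gmr m r) (R := ℝ)
  have EV := fun (j : Fin (2*m)) => eig_col hr hrm x1 x2 l1 l2 hq1 hl1 hq2 hl2 j
  ext j j'
  have hLHS : ((Matrix.of fun i j : Fin (2*m) => col m r x1 x2 j.val i.val)ᵀ
      * (Matrix.of fun i j : Fin (2*m) => col m r x1 x2 j.val i.val)) j j'
      = (fun i : Fin (2*m) => col m r x1 x2 j.val i.val)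
          ⬝ᵥ (fun i : Fin (2*m) => col m r x1 x2 j'.val i.val) := rfl
  rw [hLHS, diagonal_apply]
  -- case: distinct eigenvalue classes
  by_cases hev : evv m l1 l2 j.val = evv m l1 l2 j'.val
  swap
  · rw [if_neg (fun h => hev (by rw [h])), ortho hsym (EV j) (EV j') hev]
  -- same eigenvalue class
  have hclass : (j.val = 0 ∧ j'.val = 0) ∨ (j.val = 1 ∧ j'.val = 1) ∨ (j.val = 2 ∧ j'.val = 2)
      ∨ (3 ≤ j.val ∧ 3 ≤ j'.val) := by
    have hc := hev
    unfold evv at hc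
    split_ifs at hc <;> first | omega | (exact absurd hc h0m) | (exact absurd hc h01) | (exact absurd hc h02) | (exact absurd hc h12) | (exact absurd hc h1m) | (exact absurd hc h2m) | (exact absurd hc.symm h0m) | (exact absurd hc.symm h01) | (exact absurd hc.symm h02) | (exact absurd hc.symm h12) | (exact absurd hc.symm h1m) | (exact absurd hc.symm h2m)
  rcases hclass with ⟨e1, e2⟩ | ⟨e1, e2⟩ | ⟨e1, e2⟩ | ⟨e1, e2⟩
  · have hjj : j = j' := Fin.ext (by omega)
    rw [if_pos hjj, dot_conv]
    simp only [col, nf, e1, e2, if_pos rfl]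
    exact dR_ones
  · have hjj : j = j' := Fin.ext (by omega)
    rw [if_pos hjj, dot_conv]
    simp only [col, nf, e1, e2]
    norm_num
    exact dR_w hrm x1
  · have hjj : j = j' := Fin.ext (by omega)
    rw [if_pos hjj, dot_conv]
    simp only [col, nf, e1, e2]
    norm_num
    exact dR_w hrm x2
  -- both ≥ 3
  by_cases hj3 : j.val = 3
  · by_cases hj3' : j'.val = 3
    · have hjj : j = j' := Fin.ext (by omega)
      rw [if_pos hjj, dot_conv]
      simp only [col, nf, hj3, hj3']
      norm_num
      exact dR_sv hrm
    · have h4' : 4 ≤ j'.val := by omega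
      rw [if_neg (fun h => hj3' (by rw [← h, hj3])), dot_conv]
      have hc : col m r x1 x2 j.val = sv m r := by
        unfold col; rw [hj3]; norm_num
      rw [hc, col_ge4 h4']
      exact dR_sv_g hr hrm h4' j'.isLt
  by_cases hj3' : j'.val = 3
  · have h4 : 4 ≤ j.val := by omega
    rw [if_neg (fun h => hj3 (by rw [h, hj3'])), dot_conv]
    have hc : col m r x1 x2 j'.val = sv m r := by
      unfold col; rw [hj3']; norm_num
    rw [hc, col_ge4 h4, dR_comm]
    exact dR_sv_g hr hrm h4 j.isLt
  -- both ≥ 4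
  have h4 : 4 ≤ j.val := by omega
  have h4' : 4 ≤ j'.val := by omega
  by_cases hjj : j = j'
  · rw [if_pos hjj, dot_conv, ← hjj, col_ge4 h4]
    have hnf : nf m r x1 x2 j.val = (gk m r j.val : ℝ) * ((gk m r j.val : ℝ) + 1) := by
      unfold nf; rw [if_neg (by omega), if_neg (by omega), if_neg (by omega), if_neg (by omega)]
    rw [hnf]
    rcases gspec hr hrm h4 j.isLt with ⟨_,_,_,hk1,_⟩ | ⟨_,_,_,_,hk1,_⟩ |
      ⟨_,_,_,_,hk1,_⟩ | ⟨_,_,_,hk1,_⟩ <;>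
    · refine dR_g_norm hk1 ?_
      rcases gspec hr hrm h4 j.isLt with ⟨_,e1,e2,_,_⟩ | ⟨_,_,e1,e2,_,_⟩ |
        ⟨_,_,e1,e2,_,_⟩ | ⟨_,e1,e2,_,_⟩ <;> omega
  · rw [if_neg hjj, dot_conv, col_ge4 h4, col_ge4 h4']
    exact dR_gg hr hrm h4 j.isLt h4' j'.isLt (fun h => hjj (Fin.ext h))


/-! ### charpoly of similar matrices -/

lemma charpoly_similar {n : Type*} [Fintype n] [DecidableEq n]
    (L P D : Matrix n n ℝ) (hP : IsUnit P.det) (h : L * P = P * D) :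
    L.charpoly = D.charpoly := by
  have hPu : IsUnit ((C : ℝ →+* ℝ[X]).mapMatrix P).det := by
    rw [← RingHom.map_det]
    exact hP.map C
  have key : charmatrix L * (C : ℝ →+* ℝ[X]).mapMatrix P
      = (C : ℝ →+* ℝ[X]).mapMatrix P * charmatrix D := by
    have hdef : ∀ M : Matrix n n ℝ,
        charmatrix M = Matrix.scalar n (X : ℝ[X]) - (C : ℝ →+* ℝ[X]).mapMatrix M :=
      fun M => rfl
    rw [hdef L, hdef D, sub_mul, mul_sub]
    congr 1
    · exact (Matrix.scalar_commute (X : ℝ[X]) (fun r' => Commute.all _ _) ((C : ℝ →+* ℝ[X]).mapMatrix P)).eq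
    · rw [RingHom.mapMatrix_apply, RingHom.mapMatrix_apply, RingHom.mapMatrix_apply,
        ← Matrix.map_mul, ← Matrix.map_mul, h]
  have hdet : L.charpoly * ((C : ℝ →+* ℝ[X]).mapMatrix P).det
      = ((C : ℝ →+* ℝ[X]).mapMatrix P).det * D.charpoly := by
    rw [Matrix.charpoly, Matrix.charpoly, ← Matrix.det_mul, ← Matrix.det_mul, key]
  have hne : ((C : ℝ →+* ℝ[X]).mapMatrix P).det ≠ 0 := hPu.ne_zero
  have : (L.charpoly - D.charpoly) * ((C : ℝ →+* ℝ[X]).mapMatrix P).det = 0 := by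
    rw [sub_mul, hdet]; ring
  rcases mul_eq_zero.mp this with h' | h'
  · linear_combination h'
  · exact absurd h' hne


/-! ### roots of diagonal charpoly -/

lemma charpoly_diag_roots {n : ℕ} (d : Fin n → ℝ) :
    (diagonal d).charpoly.roots = Finset.univ.val.map d := by
  rw [Matrix.charpoly_of_upperTriangular _ (Matrix.blockTriangular_diagonal d)]
  have h : ∀ i ∈ Finset.univ, (X - C ((diagonal d) i i)) = X - C (d i) :=
    fun i _ => by rw [Matrix.diagonal_apply_eq]
  rw [Finset.prod_congr rfl h, Finset.prod_eq_multiset_prod,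
    show Multiset.map (fun i => X - C (d i)) Finset.univ.val
      = Multiset.map (fun a => X - C a) (Multiset.map d Finset.univ.val) by
        rw [Multiset.map_map]; rfl,
    roots_multiset_prod_X_sub_C]

lemma map_univ_val {n : ℕ} (F : ℕ → ℝ) :
    Finset.univ.val.map (fun i : Fin n => F i.val) = (Multiset.range n).map F := by
  rw [show (fun i : Fin n => F i.val) = F ∘ (⇑(Fin.valEmbedding : Fin n ↪ ℕ)) from rfl,
    ← Multiset.map_map, ← Finset.map_val Fin.valEmbedding Finset.univ,
    Fin.map_valEmbedding_univ, Nat.Iio_eq_range, Finset.range_val]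

lemma evv_ge3 {mm : ℕ} {l1 l2 : ℝ} {v : ℕ} (h : 3 ≤ v) : evv mm l1 l2 v = (mm:ℝ) := by
  unfold evv; rw [if_neg (by omega), if_neg (by omega), if_neg (by omega)]

lemma range_map_evv (mm : ℕ) (l1 l2 : ℝ) (t : ℕ) :
    (Multiset.range (t+3)).map (evv mm l1 l2)
      = (0:ℝ) ::ₘ l1 ::ₘ l2 ::ₘ Multiset.replicate t (mm:ℝ) := by
  induction t with
  | zero =>
    show (Multiset.range 3).map _ = _
    rw [show (3:ℕ) = 2+1 from rfl, Multiset.range_succ, Multiset.range_succ, Multiset.range_succ,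
      Multiset.range_zero]
    simp only [Multiset.map_cons, Multiset.map_zero, Multiset.replicate_zero]
    have e2 : evv mm l1 l2 2 = l2 := by unfold evv; norm_num
    have e1 : evv mm l1 l2 1 = l1 := by unfold evv; norm_num
    have e0 : evv mm l1 l2 0 = 0 := by unfold evv; norm_num
    rw [e2, e1, e0, Multiset.cons_swap l2 l1, Multiset.cons_swap l2 (0:ℝ),
      Multiset.cons_swap l1 (0:ℝ)]
  | succ t ih =>
    rw [show t+1+3 = (t+3)+1 by omega, Multiset.range_succ, Multiset.map_cons, ih,
      evv_ge3 (by omega), Multiset.replicate_succ,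
      Multiset.cons_swap ((mm:ℕ):ℝ) (0:ℝ), Multiset.cons_swap ((mm:ℕ):ℝ) l1,
      Multiset.cons_swap ((mm:ℕ):ℝ) l2]

lemma multiset_shuffle (R : Multiset ℝ) (a b c : ℝ) :
    ({b, c} : Multiset ℝ) + R + {a} = a ::ₘ b ::ₘ c ::ₘ R := by
  have h1 : ({b, c} : Multiset ℝ) + R + ({a} : Multiset ℝ)
      = b ::ₘ c ::ₘ (R + ({a} : Multiset ℝ)) := by
    rw [Multiset.insert_eq_cons, Multiset.cons_add, Multiset.singleton_add, Multiset.cons_add,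
      Multiset.cons_add]
  rw [h1, add_comm R ({a} : Multiset ℝ), Multiset.singleton_add,
    Multiset.cons_swap c a, Multiset.cons_swap b a]


end GmrAux

set_option maxHeartbeats 1000000 in
open GmrAux Finset Polynomial Matrix in
/-- For integers `m > r ≥ 1` with `2m ≥ 5`, the Laplacian spectrum of `G_{m,r}`
is the multiset
`{((3m − 2r + √(m² + 4mr − 4r²))/2)^{1}, ((3m − 2r − √(m² + 4mr − 4r²))/2)^{1}, m^{2m−3}, 0^{1}}`. -/
theorem lapSpectrum_Gmr (m r : ℕ) (hr : 1 ≤ r) (hrm : r < m) (hm : 5 ≤ 2 * m) :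
    ((Gmr m r).lapMatrix ℝ).charpoly.roots =
      {(3 * (m : ℝ) - 2 * (r : ℝ) + Real.sqrt ((m : ℝ) ^ 2 + 4 * (m : ℝ) * (r : ℝ) - 4 * (r : ℝ) ^ 2)) / 2,
       (3 * (m : ℝ) - 2 * (r : ℝ) - Real.sqrt ((m : ℝ) ^ 2 + 4 * (m : ℝ) * (r : ℝ) - 4 * (r : ℝ) ^ 2)) / 2} +
      Multiset.replicate (2 * m - 3) (m : ℝ) + {0} := by
  have hrR : (1:ℝ) ≤ (r:ℝ) := by exact_mod_cast hr
  have hmrR : (r:ℝ) < (m:ℝ) := by exact_mod_cast hrm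
  have he : (0:ℝ) < (m:ℝ) - r := by linarith
  have hΔpos : (0:ℝ) < (m : ℝ) ^ 2 + 4 * (m : ℝ) * (r : ℝ) - 4 * (r : ℝ) ^ 2 := by nlinarith
  set s : ℝ := Real.sqrt ((m : ℝ) ^ 2 + 4 * (m : ℝ) * (r : ℝ) - 4 * (r : ℝ) ^ 2) with hsdef
  have hs2 : s^2 = (m : ℝ) ^ 2 + 4 * (m : ℝ) * (r : ℝ) - 4 * (r : ℝ) ^ 2 :=
    Real.sq_sqrt hΔpos.le
  have hspos : 0 < s := Real.sqrt_pos.mpr hΔpos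
  set x1 : ℝ := (-(m:ℝ) - s)/(2*((m:ℝ) - r)) with hx1def
  set x2 : ℝ := (-(m:ℝ) + s)/(2*((m:ℝ) - r)) with hx2def
  set l1 : ℝ := ((m:ℝ) - r)*(1 - x1) with hl1def
  set l2 : ℝ := ((m:ℝ) - r)*(1 - x2) with hl2def
  have hq1 : ((m:ℝ) - r) * x1^2 + (m:ℝ) * x1 = r := by
    rw [hx1def]; field_simp; linear_combination hs2
  have hq2 : ((m:ℝ) - r) * x2^2 + (m:ℝ) * x2 = r := by
    rw [hx2def]; field_simp; linear_combination hs2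
  have hl1val : l1 = (3 * (m : ℝ) - 2 * (r : ℝ) + s) / 2 := by
    rw [hl1def, hx1def]; field_simp; ring
  have hl2val : l2 = (3 * (m : ℝ) - 2 * (r : ℝ) - s) / 2 := by
    rw [hl2def, hx2def]; field_simp; ring
  have h0m : (0:ℝ) ≠ (m:ℝ) := by linarith
  have h01 : (0:ℝ) ≠ l1 := by rw [hl1val]; intro h; nlinarith
  have h02 : (0:ℝ) ≠ l2 := by
    rw [hl2val]; intro h
    have hseq : s = 3*(m:ℝ) - 2*r := by linarith
    nlinarith [hs2]
  have h12 : l1 ≠ l2 := by rw [hl1val, hl2val]; intro h; nlinarith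
  have h1m : l1 ≠ (m:ℝ) := by
    rw [hl1val]; intro h
    have hseq : s = 2*(r:ℝ) - m := by linarith
    nlinarith [hs2]
  have h2m : l2 ≠ (m:ℝ) := by
    rw [hl2val]; intro h
    have hseq : s = (m:ℝ) - 2*r := by linarith
    nlinarith [hs2]
  set P : Matrix (Fin (2*m)) (Fin (2*m)) ℝ :=
    Matrix.of (fun i j : Fin (2*m) => col m r x1 x2 j.val i.val) with hPdef
  have hLP : (Gmr m r).lapMatrix ℝ * P
      = P * diagonal (fun j : Fin (2*m) => evv m l1 l2 j.val) := by
    ext i j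
    rw [Matrix.mul_apply, Matrix.mul_diagonal]
    have hev := congrFun (eig_col hr hrm x1 x2 l1 l2 hq1 hl1def hq2 hl2def j) i
    rw [hPdef]
    show (∑ k, (Gmr m r).lapMatrix ℝ i k * col m r x1 x2 j.val k.val)
      = col m r x1 x2 j.val i.val * evv m l1 l2 j.val
    rw [mul_comm (col m r x1 x2 j.val i.val) (evv m l1 l2 j.val)]
    exact hev
  have hGram := gram hr hrm x1 x2 l1 l2 hq1 hl1def hq2 hl2def h0m h01 h02 h12 h1m h2m
  rw [← hPdef] at hGram
  have hdetN : (diagonal (fun j : Fin (2*m) => nf m r x1 x2 j.val)).det ≠ 0 := by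
    rw [Matrix.det_diagonal, Finset.prod_ne_zero_iff]
    intro a _
    unfold nf
    split_ifs with hc1 hc2 hc3 hc4
    · exact ne_of_gt (by linarith)
    · exact ne_of_gt (by nlinarith [sq_nonneg x1])
    · exact ne_of_gt (by nlinarith [sq_nonneg x2])
    · exact ne_of_gt (mul_pos (mul_pos (show (0:ℝ) < 2*(m:ℝ) by linarith)
        (show (0:ℝ) < (r:ℝ) by linarith)) he)
    · have h4 : 4 ≤ a.val := by omega
      have hk : 1 ≤ gk m r a.val := by
        rcases gspec hr hrm h4 a.isLt with ⟨_,_,_,hk1,_⟩ | ⟨_,_,_,_,hk1,_⟩ |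
          ⟨_,_,_,_,hk1,_⟩ | ⟨_,_,_,hk1,_⟩ <;> exact hk1
      have hkR : (1:ℝ) ≤ (gk m r a.val : ℝ) := by exact_mod_cast hk
      exact ne_of_gt (by nlinarith)
  have hdetP : IsUnit P.det := by
    have h := congrArg Matrix.det hGram
    rw [Matrix.det_mul, Matrix.det_transpose] at h
    rw [isUnit_iff_ne_zero]
    intro h0
    rw [h0, mul_zero] at h
    exact hdetN h.symm
  have hcp : ((Gmr m r).lapMatrix ℝ).charpoly
      = (diagonal (fun j : Fin (2*m) => evv m l1 l2 j.val)).charpoly :=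
    charpoly_similar _ P _ hdetP hLP
  rw [hcp, charpoly_diag_roots, map_univ_val]
  conv_lhs => rw [show 2*m = (2*m-3)+3 by omega]
  rw [range_map_evv, multiset_shuffle, ← hl1val, ← hl2val]
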